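/- Let ε > 0 and let ≽ be a preference on ℝ^d_+ that is continuous, monotone, and ε-uncertainty averse: for all x, y ∈ ℝ^d_+, all c ≥ 0 and all λ ∈ (0,1), if x ≽ c·𝟙 and y ≽ c·𝟙 then λx + (1−λ)y ≽ (c−ε)·𝟙. Then there exist a normalized representation u : ℝ^d_+ → ℝ of ≽ and a quasi-concave function v : ℝ^d_+ → ℝ (i.e. v(λx+(1−λ)y) ≥ min{v(x), v(y)} for all x, y and λ ∈ [0,1]) such that sup_{x ∈ ℝ^d_+} |u(x) − v(x)| ≤ d·ε. -/
import Mathlib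


/-- Theorem `thm:quasiquasicon`: a continuous, monotone, ε-uncertainty
averse preference on `ℝ^d₊` admits a normalized representation `u` and a quasi-concave
`v` with `|u - v| ≤ d·ε`. -/
theorem stmt_12 (d : ℕ) (ε : ℝ) (hε : 0 < ε)
    (R : (Fin d → ℝ) → (Fin d → ℝ) → Prop)
    (hcomp : ∀ x y : Fin d → ℝ, 0 ≤ x → 0 ≤ y → R x y ∨ R y x)
    (htrans : ∀ x y z : Fin d → ℝ, 0 ≤ x → 0 ≤ y → 0 ≤ z → R x y → R y z → R x z)
    (hcont : ∀ x : Fin d → ℝ, 0 ≤ x →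
      IsClosed {z : Fin d → ℝ | 0 ≤ z ∧ R z x} ∧ IsClosed {z : Fin d → ℝ | 0 ≤ z ∧ R x z})
    (hmono : ∀ x y : Fin d → ℝ, 0 ≤ x → x ≤ y → R y x)
    (hmono' : ∀ x y : Fin d → ℝ, 0 ≤ x → (∀ i, x i < y i) → R y x ∧ ¬ R x y)
    -- ε-uncertainty aversion
    (hua : ∀ x y : Fin d → ℝ, 0 ≤ x → 0 ≤ y → ∀ c : ℝ, 0 ≤ c →
      ∀ t : ℝ, 0 < t → t < 1 →
      R x (fun _ => c) → R y (fun _ => c) →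
      R (t • x + (1 - t) • y) (fun _ => c - ε)) :
    ∃ u v : (Fin d → ℝ) → ℝ,
      (∀ x y : Fin d → ℝ, 0 ≤ x → 0 ≤ y → (R x y ↔ u y ≤ u x)) ∧
      (∀ c : ℝ, 0 ≤ c → u (fun _ => c) = c) ∧
      -- v is quasi-concave on ℝ^d₊
      (∀ x y : Fin d → ℝ, 0 ≤ x → 0 ≤ y → ∀ t ∈ Set.Icc (0 : ℝ) 1,
        min (v x) (v y) ≤ v (t • x + (1 - t) • y)) ∧
      (∀ x : Fin d → ℝ, 0 ≤ x → |u x - v x| ≤ (d : ℝ) * ε) := by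
  classical
  -- the degenerate case d = 0 is contradictory
  rcases Nat.eq_zero_or_pos d with rfl | hd
  · have h := hmono' 0 0 le_rfl (fun i => i.elim0)
    exact absurd h.1 h.2
  -- constants are nonnegative
  have hKpos : ∀ c : ℝ, 0 ≤ c → (0 : Fin d → ℝ) ≤ fun _ => c := fun c hc i => hc
  have hrefl : ∀ x : Fin d → ℝ, 0 ≤ x → R x x := fun x hx => (hcomp x x hx hx).elim id id
  set A : (Fin d → ℝ) → Set ℝ := fun x => {c : ℝ | 0 ≤ c ∧ R x (fun _ => c)} with hA
  set u : (Fin d → ℝ) → ℝ := fun x => sSup (A x) with hu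
  have hA0 : ∀ x : Fin d → ℝ, 0 ≤ x → (0 : ℝ) ∈ A x := by
    intro x hx
    exact ⟨le_rfl, hmono (fun _ => 0) x (fun i => le_rfl) (fun i => hx i)⟩
  have hAub : ∀ x : Fin d → ℝ, 0 ≤ x → ∀ c ∈ A x, c ≤ ∑ i, x i := by
    intro x hx c hc
    by_contra hlt
    push_neg at hlt
    have hxc : ∀ i, x i < c := by
      intro i
      have : x i ≤ ∑ j, x j :=
        Finset.single_le_sum (fun j _ => hx j) (Finset.mem_univ i)
      linarith
    exact (hmono' x (fun _ => c) hx hxc).2 hc.2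
  have hAbdd : ∀ x : Fin d → ℝ, 0 ≤ x → BddAbove (A x) := fun x hx =>
    ⟨∑ i, x i, fun c hc => hAub x hx c hc⟩
  have hAne : ∀ x : Fin d → ℝ, 0 ≤ x → (A x).Nonempty := fun x hx => ⟨0, hA0 x hx⟩
  have hKcont : Continuous (fun c : ℝ => (fun _ => c : Fin d → ℝ)) :=
    continuous_pi (fun _ => continuous_id)
  have hKle : ∀ c : ℝ, (0 : Fin d → ℝ) ≤ (fun _ => c) ↔ 0 ≤ c := by
    intro c
    constructor
    · intro h; exact h ⟨0, hd⟩
    · intro h i; exact h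
  have hAclosed : ∀ x : Fin d → ℝ, 0 ≤ x → IsClosed (A x) := by
    intro x hx
    have : A x = (fun c : ℝ => (fun _ => c : Fin d → ℝ)) ⁻¹' {z : Fin d → ℝ | 0 ≤ z ∧ R x z} := by
      ext c
      simp only [Set.mem_preimage, Set.mem_setOf_eq, hA, hKle c]
    rw [this]
    exact (hcont x hx).2.preimage hKcont
  have huA : ∀ x : Fin d → ℝ, 0 ≤ x → u x ∈ A x := fun x hx =>
    (hAclosed x hx).csSup_mem (hAne x hx) (hAbdd x hx)
  have hu0 : ∀ x : Fin d → ℝ, 0 ≤ x → 0 ≤ u x := fun x hx =>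
    le_csSup (hAbdd x hx) (hA0 x hx)
  -- the constant at level u x is weakly preferred to x
  have hconstR : ∀ x : Fin d → ℝ, 0 ≤ x → R (fun _ => u x) x := by
    intro x hx
    have hSclosed : IsClosed {c : ℝ | 0 ≤ c ∧ R (fun _ => c) x} := by
      have : {c : ℝ | 0 ≤ c ∧ R (fun _ => c) x}
          = (fun c : ℝ => (fun _ => c : Fin d → ℝ)) ⁻¹' {z : Fin d → ℝ | 0 ≤ z ∧ R z x} := by
        ext c
        simp only [Set.mem_preimage, Set.mem_setOf_eq, hKle c]
      rw [this]
      exact (hcont x hx).1.preimage hKcont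
    have hsub : Set.Ioi (u x) ⊆ {c : ℝ | 0 ≤ c ∧ R (fun _ => c) x} := by
      intro c hc
      have hc0 : 0 ≤ c := le_trans (hu0 x hx) (le_of_lt hc)
      refine ⟨hc0, ?_⟩
      rcases hcomp x (fun _ => c) hx (hKpos c hc0) with h | h
      · exact absurd (le_csSup (hAbdd x hx) ⟨hc0, h⟩) (not_le.2 hc)
      · exact h
    have : u x ∈ {c : ℝ | 0 ≤ c ∧ R (fun _ => c) x} := by
      have h1 : u x ∈ closure (Set.Ioi (u x)) := by
        rw [closure_Ioi]; exact Set.self_mem_Ici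
      exact hSclosed.closure_subset ((closure_mono hsub) h1)
    exact this.2
  -- normalization
  have hnorm : ∀ c : ℝ, 0 ≤ c → u (fun _ => c) = c := by
    intro c hc
    have hle : c ≤ u (fun _ => c) :=
      le_csSup (hAbdd _ (hKpos c hc)) ⟨hc, hrefl _ (hKpos c hc)⟩
    refine le_antisymm ?_ hle
    by_contra hlt
    push_neg at hlt
    have h := hmono' (fun _ => c) (fun _ => u (fun _ => c)) (hKpos c hc) (fun i => hlt)
    exact h.2 (huA _ (hKpos c hc)).2
  -- representation
  have hrep : ∀ x y : Fin d → ℝ, 0 ≤ x → 0 ≤ y → (R x y ↔ u y ≤ u x) := by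
    intro x y hx hy
    constructor
    · intro hxy
      have h1 : R x (fun _ => u y) :=
        htrans x y (fun _ => u y) hx hy (hKpos _ (hu0 y hy)) hxy (huA y hy).2
      exact le_csSup (hAbdd x hx) ⟨hu0 y hy, h1⟩
    · intro hle
      have h1 : R x (fun _ => u x) := (huA x hx).2
      have h2 : R (fun _ => u x) (fun _ => u y) :=
        hmono (fun _ => u y) (fun _ => u x) (hKpos _ (hu0 y hy)) (fun i => hle)
      have h3 : R (fun _ => u y) y := hconstR y hy
      exact htrans x (fun _ => u x) y hx (hKpos _ (hu0 x hx)) hy h1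
        (htrans (fun _ => u x) (fun _ => u y) y (hKpos _ (hu0 x hx)) (hKpos _ (hu0 y hy)) hy h2 h3)
  -- single-step epsilon quasiconcavity of u
  have L1 : ∀ x y : Fin d → ℝ, 0 ≤ x → 0 ≤ y → ∀ t : ℝ, 0 < t → t < 1 →
      ∀ c : ℝ, 0 ≤ c → c ≤ u x → c ≤ u y → c - ε ≤ u (t • x + (1 - t) • y) := by
    intro x y hx hy t ht0 ht1 c hc hcx hcy
    have hz : (0 : Fin d → ℝ) ≤ t • x + (1 - t) • y := by
      intro i
      simp only [Pi.add_apply, Pi.smul_apply, smul_eq_mul, Pi.zero_apply]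
      have h1 : (0:ℝ) ≤ x i := hx i
      have h2 : (0:ℝ) ≤ y i := hy i
      nlinarith
    have hRx : R x (fun _ => c) := (hrep x (fun _ => c) hx (hKpos c hc)).2 (by rw [hnorm c hc]; exact hcx)
    have hRy : R y (fun _ => c) := (hrep y (fun _ => c) hy (hKpos c hc)).2 (by rw [hnorm c hc]; exact hcy)
    have hR := hua x y hx hy c hc t ht0 ht1 hRx hRy
    rcases le_or_gt (c - ε) 0 with h | h
    · exact le_trans h (hu0 _ hz)
    · have := (hrep _ (fun _ => c - ε) hz (hKpos _ h.le)).1 hR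
      rwa [hnorm _ h.le] at this
  -- the nonnegative orthant is convex
  have hPconv : Convex ℝ {z : Fin d → ℝ | 0 ≤ z} := by
    intro a ha b hb p q hp hq hpq
    intro i
    simp only [Pi.add_apply, Pi.smul_apply, smul_eq_mul, Pi.zero_apply]
    have h1 : (0:ℝ) ≤ a i := ha i
    have h2 : (0:ℝ) ≤ b i := hb i
    nlinarith
  have hhullpos : ∀ S : Set (Fin d → ℝ), S ⊆ {z | 0 ≤ z} →
      convexHull ℝ S ⊆ {z | 0 ≤ z} := fun S hS => convexHull_min hS hPconv
  -- iterated epsilon quasiconcavity over finite sets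
  have L2 : ∀ s : Finset (Fin d → ℝ), ∀ r : ℝ, (∀ z ∈ s, 0 ≤ z ∧ r ≤ u z) →
      ∀ x ∈ convexHull ℝ (↑s : Set (Fin d → ℝ)), r - ((s.card : ℝ) - 1) * ε ≤ u x := by
    intro s
    induction s using Finset.induction_on with
    | empty => intro r _ x hx; simp at hx
    | @insert a s ha ih =>
      intro r hmem x hx
      have hra : r ≤ u a := (hmem a (Finset.mem_insert_self a s)).2
      have ha0 : 0 ≤ a := (hmem a (Finset.mem_insert_self a s)).1
      rcases s.eq_empty_or_nonempty with rfl | hs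
      · have hset : (↑(insert a (∅:Finset (Fin d → ℝ))) : Set (Fin d → ℝ)) = {a} := by simp
        rw [hset, convexHull_singleton, Set.mem_singleton_iff] at hx
        rw [hx]
        have hcard : ((insert a (∅:Finset (Fin d → ℝ))).card : ℝ) = 1 := by simp
        rw [hcard]
        simpa using hra
      · have hcard1 : (1 : ℝ) ≤ (s.card : ℝ) := by
          exact_mod_cast hs.card_pos
        rw [Finset.coe_insert, convexHull_insert (Finset.coe_nonempty.mpr hs)] at hx
        rw [mem_convexJoin] at hx
        obtain ⟨w, hw, z, hz, hseg⟩ := hx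
        rw [Set.mem_singleton_iff] at hw
        rw [hw] at hseg
        obtain ⟨p, q, hp, hq, hpq, hx⟩ := hseg
        have hz0 : 0 ≤ z := hhullpos ↑s (fun w hw => (hmem w (Finset.mem_insert_of_mem hw)).1) hz
        set c := r - ((s.card : ℝ) - 1) * ε with hc
        have hzc : c ≤ u z := ih r (fun w hw => hmem w (Finset.mem_insert_of_mem hw)) z hz
        have hcr : c ≤ r := by
          have : 0 ≤ ((s.card : ℝ) - 1) * ε := mul_nonneg (by linarith) hε.le
          linarith
        have hgoal : r - ((((insert a s).card : ℝ)) - 1) * ε = c - ε := by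
          rw [Finset.card_insert_of_notMem ha]
          push_cast
          ring
        rw [hgoal]
        rcases eq_or_lt_of_le hp with hp0 | hp0
        · -- p = 0, x = z
          have hq1 : q = 1 := by linarith
          have hxz : x = z := by
            rw [← hx, ← hp0, hq1]; simp
          rw [hxz]; linarith
        rcases eq_or_lt_of_le hq with hq0 | hq0
        · -- q = 0, x = a
          have hp1 : p = 1 := by linarith
          have hxa : x = a := by
            rw [← hx, ← hq0, hp1]; simp
          rw [hxa]; linarith
        · have hp1 : p < 1 := by linarith
          rcases le_or_gt 0 c with hc0 | hc0
          · have := L1 a z ha0 hz0 p hp0 hp1 c hc0 (le_trans hcr hra) hzc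
            have hq' : 1 - p = q := by linarith
            rw [hq', hx] at this
            exact this
          · have hx0 : 0 ≤ x := by
              rw [← hx]
              exact hPconv ha0 hz0 hp hq hpq
            have := hu0 x hx0
            linarith
  -- the quasiconcave envelope
  set S : ℝ → Set (Fin d → ℝ) := fun r => {z : Fin d → ℝ | 0 ≤ z ∧ r ≤ u z} with hS
  set V : (Fin d → ℝ) → Set ℝ := fun x => {r : ℝ | x ∈ convexHull ℝ (S r)} with hV
  set v : (Fin d → ℝ) → ℝ := fun x => sSup (V x) with hv
  have hVmem : ∀ x : Fin d → ℝ, 0 ≤ x → u x ∈ V x := by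
    intro x hx
    exact subset_convexHull ℝ (S (u x)) ⟨hx, le_rfl⟩
  -- Caratheodory upper bound
  have hVub : ∀ x : Fin d → ℝ, 0 ≤ x → ∀ r ∈ V x, r ≤ u x + (d : ℝ) * ε := by
    intro x hx r hr
    have hx' : x ∈ convexHull ℝ (S r) := hr
    rw [convexHull_eq_union] at hx'
    simp only [Set.mem_iUnion] at hx'
    obtain ⟨t, hts, hai, hxt⟩ := hx'
    have htne : t.Nonempty := by
      rcases t.eq_empty_or_nonempty with rfl | h
      · simp at hxt
      · exact h
    have hcard : t.card ≤ d + 1 := by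
      have h1 := hai.card_le_finrank_succ
      have h2 : Module.finrank ℝ (vectorSpan ℝ (Set.range ((↑) : t → (Fin d → ℝ)))) ≤
          Module.finrank ℝ (Fin d → ℝ) := Submodule.finrank_le _
      have h3 : Module.finrank ℝ (Fin d → ℝ) = d := Module.finrank_fin_fun ℝ
      rw [Fintype.card_coe] at h1
      omega
    have hL2 := L2 t r (fun z hz => hts hz) x hxt
    have hcard' : ((t.card : ℝ) - 1) ≤ (d : ℝ) := by
      have : (t.card : ℝ) ≤ (d : ℝ) + 1 := by exact_mod_cast hcard
      linarith
    nlinarith [hε.le]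
  have hVbdd : ∀ x : Fin d → ℝ, 0 ≤ x → BddAbove (V x) := fun x hx =>
    ⟨u x + (d : ℝ) * ε, fun r hr => hVub x hx r hr⟩
  have hVdown : ∀ x : Fin d → ℝ, ∀ r r' : ℝ, r' ≤ r → r ∈ V x → r' ∈ V x := by
    intro x r r' hrr hr
    refine convexHull_mono ?_ hr
    intro z hz
    exact ⟨hz.1, le_trans hrr hz.2⟩
  have huv : ∀ x : Fin d → ℝ, 0 ≤ x → u x ≤ v x ∧ v x ≤ u x + (d : ℝ) * ε := by
    intro x hx
    constructor
    · exact le_csSup (hVbdd x hx) (hVmem x hx)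
    · exact csSup_le ⟨u x, hVmem x hx⟩ (fun r hr => hVub x hx r hr)
  refine ⟨u, v, hrep, hnorm, ?_, ?_⟩
  · -- quasiconcavity of v
    intro x y hx hy t ht
    obtain ⟨ht0, ht1⟩ := ht
    set z := t • x + (1 - t) • y with hz
    have hz0 : 0 ≤ z := by
      intro i
      simp only [hz, Pi.add_apply, Pi.smul_apply, smul_eq_mul, Pi.zero_apply]
      have h1 : (0:ℝ) ≤ x i := hx i
      have h2 : (0:ℝ) ≤ y i := hy i
      nlinarith
    by_contra hcon
    push_neg at hcon
    set m := min (v x) (v y) with hm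
    set w := (v z + m) / 2 with hw
    have hw1 : v z < w := by simp only [hw]; linarith
    have hw2 : w < m := by simp only [hw]; linarith
    have hwx : w ∈ V x := by
      obtain ⟨r, hr, hwr⟩ := exists_lt_of_lt_csSup ⟨u x, hVmem x hx⟩
        (lt_of_lt_of_le hw2 (min_le_left _ _))
      exact hVdown x r w hwr.le hr
    have hwy : w ∈ V y := by
      obtain ⟨r, hr, hwr⟩ := exists_lt_of_lt_csSup ⟨u y, hVmem y hy⟩
        (lt_of_lt_of_le hw2 (min_le_right _ _))
      exact hVdown y r w hwr.le hr
    have hwz : w ∈ V z :=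
      (convex_convexHull ℝ (S w)) hwx hwy ht0 (by linarith) (by ring)
    have := le_csSup (hVbdd z hz0) hwz
    exact absurd this (not_le.2 hw1)
  · intro x hx
    obtain ⟨h1, h2⟩ := huv x hx
    rw [abs_le]
    constructor <;> linarith
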